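/- Let Ψ = (ψ_k)_{k∈ℕ} be a sequence with ψ_k ∈ (−π/2, π/2), set F_n := i·tan(ψ_{|n|}) for n ∈ ℤ, and for d ≥ 0 let G_d be the SU(2) nonlinear Fourier series (as a 2×2 matrix-valued Laurent polynomial) of the truncated sequence (F_n · 1_{−d ≤ n ≤ d}). Let M := 2^(−1/2)·[[1,1],[1,−1]]. Then for every x ∈ [0,1], with θ ∈ [0, π/2] the unique number with cos θ = x and z := e^(2iθ), and for every d ≥ 0: M · U_d(Ψ,x) · M = diag(e^(idθ), e^(−idθ)) · G_d(z) · diag(e^(idθ), e^(−idθ)). -/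

import Mathlib

open MeasureTheory Filter

noncomputable section

/-- The Pauli matrix `Z`. -/
def Zmat : Matrix (Fin 2) (Fin 2) ℂ := !![1, 0; 0, -1]

/-- The matrix `W(x) = [[x, i√(1-x²)],[i√(1-x²), x]]`. -/
def Wmat (x : ℝ) : Matrix (Fin 2) (Fin 2) ℂ :=
  !![(x : ℂ), Complex.I * Real.sqrt (1 - x ^ 2); Complex.I * Real.sqrt (1 - x ^ 2), (x : ℂ)]

/-- The QSP recursion: `U_0 = e^{iψ₀Z}` and
`U_d = e^{iψ_d Z} W(x) U_{d-1} W(x) e^{iψ_d Z}`. -/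
def Umat (ψ : ℕ → ℝ) (x : ℝ) : ℕ → Matrix (Fin 2) (Fin 2) ℂ
  | 0 => NormedSpace.exp ((Complex.I * (ψ 0 : ℂ)) • Zmat)
  | d + 1 =>
      NormedSpace.exp ((Complex.I * (ψ (d + 1) : ℂ)) • Zmat) * Wmat x * Umat ψ x d *
        Wmat x * NormedSpace.exp ((Complex.I * (ψ (d + 1) : ℂ)) • Zmat)

/-- `u_d(Ψ,x)`: the upper left entry of `U_d(Ψ,x)`. -/
def uQSP (ψ : ℕ → ℝ) (x : ℝ) (d : ℕ) : ℂ := Umat ψ x d 0 0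

/-- The Hilbert space norm `‖g‖ = ((2/π) ∫₀¹ |g(x)|² dx/√(1-x²))^{1/2}`. -/
def qspNorm (g : ℝ → ℝ) : ℝ :=
  Real.sqrt ((2 / Real.pi) * ∫ x in (0:ℝ)..1, g x ^ 2 / Real.sqrt (1 - x ^ 2))

/-- The phase sequence `ψ` represents the signal `f`: all phases lie in `(-π/2,π/2)`,
the Plancherel identity `∑_{k∈ℤ} log(1+tan²ψ_{|k|}) = -(2/π)∫₀¹ log(1-f(x)²) dx/√(1-x²)`
holds, and `Im u_d(Ψ,·) → f` in the Hilbert space norm as `d → ∞`. -/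
def QSPRepresents (f : ℝ → ℝ) (ψ : ℕ → ℝ) : Prop :=
  (∀ k, ψ k ∈ Set.Ioo (-(Real.pi / 2)) (Real.pi / 2)) ∧
  Summable (fun k : ℕ => Real.log (1 + Real.tan (ψ (k + 1)) ^ 2)) ∧
  Real.log (1 + Real.tan (ψ 0) ^ 2) +
      2 * ∑' k : ℕ, Real.log (1 + Real.tan (ψ (k + 1)) ^ 2) =
    -(2 / Real.pi) * ∫ x in (0:ℝ)..1, Real.log (1 - f x ^ 2) / Real.sqrt (1 - x ^ 2) ∧
  Tendsto (fun d : ℕ => qspNorm (fun x => (uQSP ψ x d).im - f x)) atTop (nhds 0)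

/-- The matrix `M = 2^{-1/2} [[1,1],[1,-1]]`. -/
def Mmat : Matrix (Fin 2) (Fin 2) ℂ :=
  (((Real.sqrt 2)⁻¹ : ℝ) : ℂ) • !![1, 1; 1, -1]

/-- The SU(2) NLFT factor `(1+|F n|²)^{-1/2} · [[1, F n zⁿ],[−conj(F n) z⁻ⁿ, 1]]`. -/
def nlftFactor (F : ℤ → ℂ) (n : ℤ) (z : ℂ) : Matrix (Fin 2) (Fin 2) ℂ :=
  (((Real.sqrt (1 + ‖F n‖ ^ 2))⁻¹ : ℝ) : ℂ) •
    !![1, F n * z ^ n; -(starRingEnd ℂ (F n)) * z ^ (-n), 1]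

/-- Ordered product of the NLFT factors for `-K ≤ n ≤ K`. -/
def nlftPartial (F : ℤ → ℂ) (K : ℕ) (z : ℂ) : Matrix (Fin 2) (Fin 2) ℂ :=
  (((List.range (2 * K + 1)).map (fun j => nlftFactor F ((j : ℤ) - (K : ℤ)) z)).prod)

open Classical in
/-- A bound for the support of a finitely supported sequence. -/
def suppBound (F : ℤ → ℂ) : ℕ :=
  if h : (Function.support F).Finite then h.toFinset.sup (fun n => n.natAbs) else 0

/-- The SU(2) nonlinear Fourier series of a finitely supported sequence `F : ℤ → ℂ`,
evaluated at `z`: the ordered product over increasing `n` of the factors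
`(1+|F n|²)^{-1/2} · [[1, F n zⁿ],[−conj(F n) z⁻ⁿ, 1]]`. -/
def nlft (F : ℤ → ℂ) (z : ℂ) : Matrix (Fin 2) (Fin 2) ℂ := nlftPartial F (suppBound F) z

/-- First entry `a(z)` of the nonlinear Fourier series. -/
def nlftA (F : ℤ → ℂ) (z : ℂ) : ℂ := nlft F z 0 0

/-- Second entry `b(z)` of the nonlinear Fourier series. -/
def nlftB (F : ℤ → ℂ) (z : ℂ) : ℂ := nlft F z 0 1
lemma smul_fin_two (r a b c d : ℂ) : r • !![a, b; c, d] = !![r*a, r*b; r*c, r*d] := by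
  ext i j; fin_cases i <;> fin_cases j <;> simp

lemma exp_smul_Zmat (a : ℝ) :
    NormedSpace.exp ((Complex.I * (a:ℂ)) • Zmat) =
      !![Complex.exp (Complex.I * a), 0; 0, Complex.exp (-(Complex.I * a))] := by
  have hZ : (Complex.I * (a:ℂ)) • Zmat = Matrix.diagonal ![Complex.I * a, -(Complex.I * a)] := by
    ext i j; fin_cases i <;> fin_cases j <;> simp [Zmat, Matrix.diagonal]
  rw [hZ, Matrix.exp_diagonal]
  ext i j
  fin_cases i <;> fin_cases j <;>
    simp [Matrix.diagonal, ← Complex.exp_eq_exp_ℂ]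

lemma Mmat_mul_Mmat : Mmat * Mmat = 1 := by
  have h2 : ((((Real.sqrt 2)⁻¹ : ℝ)) : ℂ) * ((((Real.sqrt 2)⁻¹ : ℝ)) : ℂ) = 2⁻¹ := by
    push_cast
    rw [← mul_inv, ← Complex.ofReal_mul, Real.mul_self_sqrt (by norm_num : (0:ℝ) ≤ 2)]
    norm_num
  rw [Mmat, Matrix.smul_mul, Matrix.mul_smul, smul_smul, h2, Matrix.mul_fin_two]
  norm_num [smul_fin_two]
  exact Matrix.one_fin_two.symm

lemma Mmat_conj_diag (a d : ℂ) :
    Mmat * !![a, 0; 0, d] * Mmat = (2⁻¹ : ℂ) • !![a + d, a - d; a - d, a + d] := by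
  have h2 : ((((Real.sqrt 2)⁻¹ : ℝ)) : ℂ) * ((((Real.sqrt 2)⁻¹ : ℝ)) : ℂ) = 2⁻¹ := by
    push_cast
    rw [← mul_inv, ← Complex.ofReal_mul, Real.mul_self_sqrt (by norm_num : (0:ℝ) ≤ 2)]
    norm_num
  rw [Mmat, Matrix.smul_mul, Matrix.mul_smul, Matrix.smul_mul, smul_smul, h2,
    Matrix.mul_fin_two, Matrix.mul_fin_two]
  congr 1
  congr 1 <;> ring

lemma fin_two_ext {α : Type*} {a b c d a' b' c' d' : α}
    (h11 : a = a') (h12 : b = b') (h21 : c = c') (h22 : d = d') :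
    !![a, b; c, d] = !![a', b'; c', d'] := by
  subst h11 h12 h21 h22; rfl
lemma nlftFactor_of_zero (F : ℤ → ℂ) (n : ℤ) (z : ℂ) (h : F n = 0) : nlftFactor F n z = 1 := by
  simp [nlftFactor, h, Matrix.one_fin_two]

lemma nlftPartial_eq (F : ℤ → ℂ) (K : ℕ) (z : ℂ) : nlftPartial F K z =
    ((List.range (2*K+1)).map (fun j : ℕ => nlftFactor F ((j:ℤ) - (K:ℤ)) z)).prod := by
  rw [nlftPartial]
  rw [show (do let a ← List.range (2*K+1); pure ((a:ℕ):ℤ)) =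
    (List.range (2*K+1)).map (fun a : ℕ => (a:ℤ)) from List.flatMap_pure_eq_map _ _, List.map_map]
  rfl

lemma nlftPartial_succ (F : ℤ → ℂ) (K : ℕ) (z : ℂ) :
    nlftPartial F (K + 1) z =
      nlftFactor F (-(K + 1 : ℕ) : ℤ) z * nlftPartial F K z * nlftFactor F ((K + 1 : ℕ) : ℤ) z := by
  have key : ∀ f g : ℕ → Matrix (Fin 2) (Fin 2) ℂ,
      (∀ j < 2*K+1, f (j+1) = g j) →
      List.map f (List.range (2*K+2+1)) =
        f 0 :: (List.map g (List.range (2*K+1)) ++ [f (2*K+2)]) := by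
    intro f g hfg
    rw [List.range_succ_eq_map, List.map_cons, List.map_map]
    congr 1
    rw [show 2*K+2 = (2*K+1)+1 by ring, List.range_succ, List.map_append]
    congr 1
    apply List.map_congr_left; intro j hj
    simpa [Nat.succ_eq_add_one] using hfg j (List.mem_range.mp hj)
  rw [nlftPartial_eq, nlftPartial_eq, show 2*(K+1)+1 = 2*K+2+1 by ring,
    key (fun j : ℕ => nlftFactor F ((j : ℤ) - ((K+1:ℕ):ℤ)) z)
      (fun j : ℕ => nlftFactor F ((j : ℤ) - (K : ℤ)) z)
      (by intro j _; congr 1; push_cast; ring)]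
  rw [List.prod_cons, List.prod_append, List.prod_singleton]
  rw [show ((0:ℕ):ℤ) - ((K+1:ℕ):ℤ) = (-(K+1:ℕ) : ℤ) by push_cast; ring,
    show ((2*K+2:ℕ):ℤ) - ((K+1:ℕ):ℤ) = ((K+1:ℕ) : ℤ) by push_cast; ring]
  rw [mul_assoc]

lemma nlftPartial_ext (F G : ℤ → ℂ) (K : ℕ) (z : ℂ)
    (h : ∀ n : ℤ, n.natAbs ≤ K → F n = G n) : nlftPartial F K z = nlftPartial G K z := by
  rw [nlftPartial_eq, nlftPartial_eq]
  congr 1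
  apply List.map_congr_left
  intro j hj
  have hj' := List.mem_range.mp hj
  have : ((j:ℤ) - (K:ℤ)).natAbs ≤ K := by omega
  rw [nlftFactor, nlftFactor, h _ this]

lemma nlft_eq_nlftPartial (F : ℤ → ℂ) (K : ℕ) (z : ℂ)
    (h : ∀ n : ℤ, K < n.natAbs → F n = 0) : nlft F z = nlftPartial F K z := by
  have hfin : (Function.support F).Finite := by
    apply Set.Finite.subset (Set.finite_Icc (-(K:ℤ)) (K:ℤ))
    intro n hn
    simp only [Set.mem_Icc]
    by_contra hc
    exact hn (h n (by omega))
  have hsb : suppBound F = hfin.toFinset.sup (fun n => n.natAbs) := by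
    rw [suppBound, dif_pos hfin]
  have hz : ∀ n : ℤ, suppBound F < n.natAbs → F n = 0 := by
    intro n hn
    by_contra hc
    have hmem : n ∈ hfin.toFinset := hfin.mem_toFinset.mpr hc
    have h2 : n.natAbs ≤ suppBound F := by
      rw [hsb]; exact Finset.le_sup (f := fun n : ℤ => n.natAbs) hmem
    omega
  have stable : ∀ L, suppBound F ≤ L → nlftPartial F L z = nlftPartial F (suppBound F) z := by
    intro L hL
    induction L with
    | zero => rw [Nat.le_zero.mp hL]
    | succ L ih =>
      rcases Nat.lt_or_ge (suppBound F) (L+1) with hlt | hge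
      · have hL' : suppBound F ≤ L := by omega
        rw [nlftPartial_succ, ih hL',
          nlftFactor_of_zero F _ z (hz _ (by simp; omega)),
          nlftFactor_of_zero F _ z (hz _ (by simp; omega)), one_mul, mul_one]
      · rw [Nat.le_antisymm hge hL]
  have hK : suppBound F ≤ K := by
    rw [hsb]
    apply Finset.sup_le
    intro n hn
    have : F n ≠ 0 := by simpa using hfin.mem_toFinset.mp hn
    by_contra hc
    exact this (h n (by omega))
  rw [nlft, stable K hK]
lemma Mmat_conj_sym (a b : ℂ) :
    Mmat * !![a, b; b, a] * Mmat = !![a + b, 0; 0, a - b] := by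
  have h2 : ((((Real.sqrt 2)⁻¹ : ℝ)) : ℂ) * ((((Real.sqrt 2)⁻¹ : ℝ)) : ℂ) = 2⁻¹ := by
    push_cast
    rw [← mul_inv, ← Complex.ofReal_mul, Real.mul_self_sqrt (by norm_num : (0:ℝ) ≤ 2)]
    norm_num
  rw [Mmat, Matrix.smul_mul, Matrix.mul_smul, Matrix.smul_mul, smul_smul, h2,
    Matrix.mul_fin_two, Matrix.mul_fin_two, smul_fin_two]
  apply fin_two_ext <;> ring

lemma diag_mul_diag (a b c e : ℂ) : !![a,0;0,b] * !![c,0;0,e] = !![a*c, 0; 0, b*e] := by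
  rw [Matrix.mul_fin_two]
  apply fin_two_ext <;> ring

lemma exp_I_neg (t : ℝ) :
    Complex.exp (-(Complex.I * t)) = Real.cos t - Real.sin t * Complex.I := by
  rw [show -(Complex.I * (t:ℂ)) = (-(t:ℂ)) * Complex.I by ring, Complex.exp_mul_I,
    Complex.cos_neg, Complex.sin_neg, ← Complex.ofReal_cos, ← Complex.ofReal_sin]
  ring

lemma exp_I_pos (t : ℝ) :
    Complex.exp (Complex.I * t) = Real.cos t + Real.sin t * Complex.I := by
  rw [show Complex.I * (t:ℂ) = (t:ℂ) * Complex.I by ring, Complex.exp_mul_I,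
    ← Complex.ofReal_cos, ← Complex.ofReal_sin]

/-- `M e^{iψZ} M = [[cos ψ, i sin ψ],[i sin ψ, cos ψ]]`. -/
lemma MEM (t : ℝ) :
    Mmat * NormedSpace.exp ((Complex.I * (t:ℂ)) • Zmat) * Mmat =
      !![(Real.cos t : ℂ), Complex.I * Real.sin t;
         Complex.I * Real.sin t, (Real.cos t : ℂ)] := by
  rw [exp_smul_Zmat, Mmat_conj_diag, exp_I_pos, exp_I_neg, smul_fin_two]
  apply fin_two_ext <;> ring

/-- `M W M` is diagonal. -/
lemma MWM (x θ : ℝ) (hx : x ∈ Set.Icc (0:ℝ) 1) (hθ : θ ∈ Set.Icc (0:ℝ) (Real.pi / 2))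
    (hcos : Real.cos θ = x) :
    Mmat * Wmat x * Mmat =
      !![Complex.exp (Complex.I * θ), 0; 0, Complex.exp (-(Complex.I * θ))] := by
  have hsin : Real.sqrt (1 - x ^ 2) = Real.sin θ := by
    rw [← hcos, ← Real.sin_eq_sqrt_one_sub_cos_sq hθ.1
      (le_trans hθ.2 (by linarith [Real.pi_pos]))]
  rw [Wmat, Mmat_conj_sym, exp_I_pos, exp_I_neg, hsin, ← hcos]
  apply fin_two_ext <;> ring

/-- Evaluation of an NLFT factor coming from `i tan t`. -/
lemma nlftFactor_eval (t : ℝ) (hc : 0 < Real.cos t) (F : ℤ → ℂ) (n : ℤ) (z : ℂ)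
    (hF : F n = Complex.I * Real.tan t) :
    nlftFactor F n z =
      !![(Real.cos t : ℂ), (Complex.I * Real.sin t) * z ^ n;
         (Complex.I * Real.sin t) * z ^ (-n), (Real.cos t : ℂ)] := by
  have habs : ‖F n‖ ^ 2 = Real.tan t ^ 2 := by
    rw [hF, norm_mul, Complex.norm_I, one_mul, Complex.norm_real, Real.norm_eq_abs, sq_abs]
  have hcoef : ((Real.sqrt (1 + ‖F n‖ ^ 2))⁻¹ : ℝ) = Real.cos t := by
    rw [habs, Real.inv_sqrt_one_add_tan_sq hc]
  have hconj : -(starRingEnd ℂ (Complex.I * (Real.tan t : ℂ))) = Complex.I * Real.tan t := by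
    rw [map_mul, Complex.conj_I, Complex.conj_ofReal]
    ring
  have hct : (Real.cos t : ℂ) * (Real.tan t : ℂ) = (Real.sin t : ℂ) := by
    norm_cast
    rw [Real.tan_eq_sin_div_cos]
    field_simp
  rw [nlftFactor, hcoef, hF, hconj, smul_fin_two]
  apply fin_two_ext
  · rw [mul_one]
  · rw [show (Real.cos t : ℂ) * (Complex.I * Real.tan t * z ^ n)
      = ((Real.cos t : ℂ) * Real.tan t) * Complex.I * z ^ n by ring, hct]; ring
  · rw [show (Real.cos t : ℂ) * (Complex.I * Real.tan t * z ^ (-n))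
      = ((Real.cos t : ℂ) * Real.tan t) * Complex.I * z ^ (-n) by ring, hct]; ring
  · rw [mul_one]
lemma step_CD (c s e e' w w' : ℂ) (hw : e * w = e') (hw' : e' * w' = e) :
    !![c, s; s, c] * !![e, 0; 0, e'] = !![e, 0; 0, e'] * !![c, s*w; s*w', c] := by
  rw [Matrix.mul_fin_two, Matrix.mul_fin_two]
  apply fin_two_ext
  · ring
  · linear_combination (-s) * hw
  · linear_combination (-s) * hw'
  · ring

lemma step_DC (c s e e' w w' : ℂ) (hw : e * w = e') (hw' : e' * w' = e) :
    !![e, 0; 0, e'] * !![c, s; s, c] = !![c, s*w'; s*w, c] * !![e, 0; 0, e'] := by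
  rw [Matrix.mul_fin_two, Matrix.mul_fin_two]
  apply fin_two_ext
  · ring
  · linear_combination (-s) * hw'
  · linear_combination (-s) * hw
  · ring

lemma exp_shift (k : ℕ) (θ : ℝ) :
    Complex.exp (Complex.I * k * θ) * (Complex.exp (2*Complex.I*θ)) ^ (-(k:ℤ)) =
      Complex.exp (-(Complex.I * k * θ)) := by
  rw [← Complex.exp_int_mul, ← Complex.exp_add]
  congr 1
  push_cast
  ring

lemma exp_shift' (k : ℕ) (θ : ℝ) :
    Complex.exp (-(Complex.I * k * θ)) * (Complex.exp (2*Complex.I*θ)) ^ ((k:ℤ)) =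
      Complex.exp (Complex.I * k * θ) := by
  rw [← Complex.exp_int_mul, ← Complex.exp_add]
  congr 1
  push_cast
  ring

lemma Dm_mul_Dm (θ : ℝ) (d : ℕ) :
    !![Complex.exp (Complex.I * θ), 0; 0, Complex.exp (-(Complex.I * θ))] *
      !![Complex.exp (Complex.I * d * θ), 0; 0, Complex.exp (-(Complex.I * d * θ))] =
    !![Complex.exp (Complex.I * (d+1:ℕ) * θ), 0; 0, Complex.exp (-(Complex.I * (d+1:ℕ) * θ))] := by
  rw [diag_mul_diag]
  apply fin_two_ext <;> [skip; rfl; rfl; skip] <;>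
    (rw [← Complex.exp_add]; congr 1; push_cast; ring)

lemma Dm_mul_Dm' (θ : ℝ) (d : ℕ) :
    !![Complex.exp (Complex.I * d * θ), 0; 0, Complex.exp (-(Complex.I * d * θ))] *
      !![Complex.exp (Complex.I * θ), 0; 0, Complex.exp (-(Complex.I * θ))] =
    !![Complex.exp (Complex.I * (d+1:ℕ) * θ), 0; 0, Complex.exp (-(Complex.I * (d+1:ℕ) * θ))] := by
  rw [diag_mul_diag]
  apply fin_two_ext <;> [skip; rfl; rfl; skip] <;>
    (rw [← Complex.exp_add]; congr 1; push_cast; ring)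

lemma nlftPartial_zero (F : ℤ → ℂ) (z : ℂ) : nlftPartial F 0 z = nlftFactor F 0 z := by
  rw [nlftPartial_eq, show 2*0+1 = 1 from rfl,
    show List.range 1 = [0] from rfl, List.map_singleton, List.prod_singleton]
  norm_num

lemma final_assoc (M C L Dd D' P fm fp : Matrix (Fin 2) (Fin 2) ℂ)
    (hMM : M * M = 1)
    (h1 : L * Dd = D') (h2 : Dd * L = D') (h3 : C * D' = D' * fm) (h4 : D' * C = fp * D') :
    C * (L * (Dd * P * Dd * (L * C))) = D' * (fm * P * fp) * D' := by
  have : C * (L * (Dd * P * Dd * (L * C))) = (C * (L * Dd)) * P * ((Dd * L) * C) := by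
    simp only [Matrix.mul_assoc]
  rw [this, h1, h2, h3, h4]
  simp only [Matrix.mul_assoc]
set_option maxHeartbeats 1000000 in

/-- Lemma `qspnlfs` of the paper: conjugating the QSP product by `M`
gives the nonlinear Fourier series of the truncation of `Fₙ = i tan ψ_{|n|}`, up to
diagonal factors. -/
theorem qsp_eq_nlfs (ψ : ℕ → ℝ) (hψ : ∀ k, ψ k ∈ Set.Ioo (-(Real.pi / 2)) (Real.pi / 2))
    (x : ℝ) (hx : x ∈ Set.Icc (0:ℝ) 1) (θ : ℝ) (hθ : θ ∈ Set.Icc (0:ℝ) (Real.pi / 2))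
    (hcos : Real.cos θ = x) (d : ℕ) :
    Mmat * Umat ψ x d * Mmat =
      !![Complex.exp (Complex.I * d * θ), 0; 0, Complex.exp (-(Complex.I * d * θ))] *
        nlft (fun n : ℤ => if n.natAbs ≤ d then Complex.I * Real.tan (ψ n.natAbs) else 0)
          (Complex.exp (2 * Complex.I * θ)) *
        !![Complex.exp (Complex.I * d * θ), 0; 0, Complex.exp (-(Complex.I * d * θ))] := by
  induction d with
  | zero =>
    rw [show Umat ψ x 0 = NormedSpace.exp ((Complex.I * (ψ 0 : ℂ)) • Zmat) from rfl, MEM,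
      nlft_eq_nlftPartial _ 0 _ (fun n hn => if_neg (by omega)), nlftPartial_zero]
    simp only [Nat.cast_zero, mul_zero, zero_mul, neg_zero, Complex.exp_zero,
      ← Matrix.one_fin_two, one_mul, mul_one]
    rw [nlftFactor_eval (ψ 0) (Real.cos_pos_of_mem_Ioo (hψ 0)) _ 0 _ (by norm_num)]
    apply fin_two_ext <;> simp
  | succ d ih =>
    have hc : 0 < Real.cos (ψ (d+1)) := Real.cos_pos_of_mem_Ioo (hψ (d+1))
    set z := Complex.exp (2 * Complex.I * θ) with hz
    set F' : ℤ → ℂ := fun n : ℤ =>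
      if n.natAbs ≤ d + 1 then Complex.I * Real.tan (ψ n.natAbs) else 0 with hF'
    have hMM : ∀ A : Matrix (Fin 2) (Fin 2) ℂ, Mmat * (Mmat * A) = A := fun A => by
      rw [← Matrix.mul_assoc, Mmat_mul_Mmat, one_mul]
    have expand : ∀ E W U : Matrix (Fin 2) (Fin 2) ℂ,
        Mmat * (E * W * U * W * E) * Mmat =
          (Mmat*E*Mmat) * ((Mmat*W*Mmat) * ((Mmat*U*Mmat) * ((Mmat*W*Mmat) * (Mmat*E*Mmat)))) := by
      intro E W U
      simp only [Matrix.mul_assoc, hMM]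
    have hFneg : F' (-((d+1:ℕ):ℤ)) = Complex.I * Real.tan (ψ (d+1)) := by
      have h1 : (-((d+1:ℕ):ℤ)).natAbs = d + 1 := by
        rw [Int.natAbs_neg, Int.natAbs_natCast]
      rw [hF']
      simp only [h1, le_refl, if_true]
    have hFpos : F' (((d+1:ℕ):ℤ)) = Complex.I * Real.tan (ψ (d+1)) := by
      have h1 : (((d+1:ℕ):ℤ)).natAbs = d + 1 := Int.natAbs_natCast _
      rw [hF']
      simp only [h1, le_refl, if_true]
    have hfneg := nlftFactor_eval (ψ (d+1)) hc F' (-((d+1:ℕ):ℤ)) z hFneg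
    rw [neg_neg] at hfneg
    have hfpos := nlftFactor_eval (ψ (d+1)) hc F' (((d+1:ℕ):ℤ)) z hFpos
    have hmid : nlftPartial F' d z = nlft
        (fun n : ℤ => if n.natAbs ≤ d then Complex.I * Real.tan (ψ n.natAbs) else 0) z := by
      rw [nlft_eq_nlftPartial _ d z (fun n hn => if_neg (by omega))]
      apply nlftPartial_ext
      intro n hn
      rw [hF']
      simp only [if_pos hn, if_pos (by omega : n.natAbs ≤ d + 1)]
    rw [show Umat ψ x (d+1) = NormedSpace.exp ((Complex.I * (ψ (d+1) : ℂ)) • Zmat) * Wmat x *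
        Umat ψ x d * Wmat x * NormedSpace.exp ((Complex.I * (ψ (d+1) : ℂ)) • Zmat) from rfl,
      expand, MEM, MWM x θ hx hθ hcos, ih,
      nlft_eq_nlftPartial F' (d+1) z (fun n hn => by rw [hF']; exact if_neg (by omega)),
      nlftPartial_succ, hfneg, hfpos, hmid]
    exact final_assoc Mmat _ _ _ _ _ _ _ Mmat_mul_Mmat (Dm_mul_Dm θ d) (Dm_mul_Dm' θ d)
      (step_CD _ (Complex.I * (Real.sin (ψ (d+1)) : ℂ)) _ _ _ _
        (exp_shift (d+1) θ) (exp_shift' (d+1) θ))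
      (step_DC _ (Complex.I * (Real.sin (ψ (d+1)) : ℂ)) _ _ _ _
        (exp_shift (d+1) θ) (exp_shift' (d+1) θ))

end
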